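/- arXiv:1709.03389 — 2 statements merged into one kernel-verified Lean document; each statement's English description precedes it below -/
import Mathlib

section
/- Let q = 6 + 2√5 and let W₁₀ᴱ(x,y) = x¹⁰ + (1350+600√5)x⁶y⁴ − (5100+2280√5)x⁴y⁶ + (36225+16200√5)x²y⁸ + (30500+13640√5)y¹⁰. The zeta polynomial of W₁₀ᴱ (with respect to q) equals P₁₀ᴱ(T) = (1/7)·[(520+232√5)T⁴ − (320+144√5)T³ − (168+76√5)T² − (30+14√5)T + 5+2√5]. -/
/- STATEMENT 11: the zeta polynomial (w.r.t. q = 6+2√5) of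
W₁₀ᴱ = x¹⁰ + (1350+600√5)x⁶y⁴ - (5100+2280√5)x⁴y⁶ + (36225+16200√5)x²y⁸ + (30500+13640√5)y¹⁰
is P₁₀ᴱ(T) = (1/7)[(520+232√5)T⁴ - (320+144√5)T³ - (168+76√5)T² - (30+14√5)T + 5+2√5]. -/

set_option maxRecDepth 80000
set_option maxHeartbeats 4000000

noncomputable section

abbrev Cxy : Type := MvPolynomial (Fin 2) ℂ

/-- The formal power series expansion of `1/((1-T)(1-qT))`. -/
def geomQ (q : ℝ) : PowerSeries Cxy :=
  PowerSeries.mk fun m => algebraMap ℂ Cxy (∑ j ∈ Finset.range (m + 1), (q : ℂ) ^ j)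

/-- A polynomial `P(T) ∈ ℂ[T]` viewed as a power series with coefficients in ℂ[x,y]. -/
def polyToSeries (P : Polynomial ℂ) : PowerSeries Cxy :=
  PowerSeries.mk fun m => algebraMap ℂ Cxy (P.coeff m)

/-- The power series `(y(1-T) + xT)^n`. -/
def bodySeries (n : ℕ) : PowerSeries Cxy :=
  (PowerSeries.C (MvPolynomial.X 1) * (1 - PowerSeries.X)
    + PowerSeries.C (MvPolynomial.X 0) * PowerSeries.X) ^ n

/-- `P` is a (= the) zeta polynomial of `W` (of shape `x^n + ∑_{i=d}^n A_i x^{n-i}y^i`). -/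
def IsZetaPoly (q : ℝ) (n d : ℕ) (W : Cxy) (P : Polynomial ℂ) : Prop :=
  P.degree ≤ (n - d : ℕ) ∧
  PowerSeries.coeff (n - d) (polyToSeries P * geomQ q * bodySeries n)
    = MvPolynomial.C (((q : ℂ) - 1)⁻¹) * (W - MvPolynomial.X 0 ^ n)

def sqrt5C : ℂ := (Real.sqrt 5 : ℝ)

/-- The extremal invariant polynomial of degree 10 (n = 10, d = 4). -/
def W10E : Cxy :=
  MvPolynomial.X 0 ^ 10
    + MvPolynomial.C (1350 + 600 * sqrt5C) * MvPolynomial.X 0 ^ 6 * MvPolynomial.X 1 ^ 4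
    - MvPolynomial.C (5100 + 2280 * sqrt5C) * MvPolynomial.X 0 ^ 4 * MvPolynomial.X 1 ^ 6
    + MvPolynomial.C (36225 + 16200 * sqrt5C) * MvPolynomial.X 0 ^ 2 * MvPolynomial.X 1 ^ 8
    + MvPolynomial.C (30500 + 13640 * sqrt5C) * MvPolynomial.X 1 ^ 10

def P10E : Polynomial ℂ :=
  Polynomial.C (1 / 7 : ℂ) *
    (Polynomial.C (520 + 232 * sqrt5C) * Polynomial.X ^ 4
      - Polynomial.C (320 + 144 * sqrt5C) * Polynomial.X ^ 3
      - Polynomial.C (168 + 76 * sqrt5C) * Polynomial.X ^ 2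
      - Polynomial.C (30 + 14 * sqrt5C) * Polynomial.X
      + Polynomial.C (5 + 2 * sqrt5C))

open MvPolynomial in
lemma coeff_body (m : ℕ) (h : m ≤ 10) :
    PowerSeries.coeff m (bodySeries 10)
      = (Nat.choose 10 m : Cxy) * X 1 ^ (10 - m) * (X 0 - X 1) ^ m := by
  have hb : bodySeries 10
      = (((Polynomial.C (X 1 : Cxy) + Polynomial.C ((X 0 : Cxy) - X 1) * Polynomial.X) ^ 10 :
          Polynomial Cxy) : PowerSeries Cxy) := by
    rw [bodySeries, Polynomial.coe_pow]
    simp only [Polynomial.coe_add, Polynomial.coe_mul, Polynomial.coe_C, Polynomial.coe_X]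
    rw [map_sub]
    ring
  rw [hb, Polynomial.coeff_coe, add_pow, Polynomial.finset_sum_coeff]
  rw [Finset.sum_eq_single (10 - m)]
  · have h1 : 10 - (10 - m) = m := by omega
    simp only [mul_pow, ← Polynomial.C_pow, ← Polynomial.C_eq_natCast, ← map_mul, h1,
      Polynomial.coeff_C_mul, Polynomial.coeff_mul_C, Polynomial.coeff_X_pow, if_pos rfl]
    rw [Nat.choose_symm h]
    push_cast
    ring
  · intro k hk hne
    have h2 : 10 - k ≠ m := by simp at hk; omega
    simp only [mul_pow, ← Polynomial.C_pow, ← Polynomial.C_eq_natCast, ← map_mul,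
      Polynomial.coeff_C_mul, Polynomial.coeff_mul_C, Polynomial.coeff_X_pow,
      if_neg (Ne.symm h2), mul_zero, zero_mul]
  · intro hmem; exfalso; apply hmem; simp; omega

theorem zeta_poly_of_W10E : IsZetaPoly (6 + 2 * Real.sqrt 5) 10 4 W10E P10E := by
  have hs : sqrt5C * sqrt5C = 5 := by
    rw [sqrt5C, ← Complex.ofReal_mul, Real.mul_self_sqrt (by norm_num : (0:ℝ) ≤ 5)]
    norm_num
  have hq : ((6 + 2 * Real.sqrt 5 : ℝ) : ℂ) = 6 + 2 * sqrt5C := by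
    rw [sqrt5C]; push_cast; ring
  have hinv : (((6 + 2 * Real.sqrt 5 : ℝ) : ℂ) - 1)⁻¹ = 1 - 2/5 * sqrt5C := by
    rw [hq]
    have h1 : ((6:ℂ) + 2 * sqrt5C - 1) * (1 - 2/5 * sqrt5C) = 1 := by
      linear_combination (-(4/5) : ℂ) * hs
    exact inv_eq_of_mul_eq_one_right h1
  constructor
  · show P10E.degree ≤ (6 : ℕ)
    rw [P10E]
    compute_degree
    all_goals norm_num
  · show PowerSeries.coeff 6 _ = _
    rw [hinv]
    have cb0 := coeff_body 0 (by norm_num)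
    have cb1 := coeff_body 1 (by norm_num)
    have cb2 := coeff_body 2 (by norm_num)
    have cb3 := coeff_body 3 (by norm_num)
    have cb4 := coeff_body 4 (by norm_num)
    have cb5 := coeff_body 5 (by norm_num)
    have cb6 := coeff_body 6 (by norm_num)
    norm_num [PowerSeries.coeff_mul, Finset.Nat.sum_antidiagonal_eq_sum_range_succ_mk,
      Finset.sum_range_succ, Finset.sum_range_zero, polyToSeries, geomQ,
      PowerSeries.coeff_mk, MvPolynomial.algebraMap_eq, cb0, cb1, cb2, cb3, cb4, cb5, cb6,
      P10E, Polynomial.coeff_add, Polynomial.coeff_sub, Polynomial.coeff_C_mul,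
      Polynomial.coeff_X_pow, Polynomial.coeff_mul_X_pow', Polynomial.coeff_C, Polynomial.coeff_X, hq, W10E,
      Nat.choose, map_ofNat] 
    have ht : (MvPolynomial.C sqrt5C : Cxy) * MvPolynomial.C sqrt5C = 5 := by
      rw [← map_mul, hs, map_ofNat]
    have ha : (7 : Cxy) * MvPolynomial.C (1/7 : ℂ) = 1 := by
      rw [(map_ofNat (MvPolynomial.C : ℂ →+* Cxy) 7).symm, ← map_mul,
        show (7 : ℂ) * (1/7) = 1 by norm_num, map_one]
    have hb : (5 : Cxy) * MvPolynomial.C (2/5 : ℂ) = 2 := by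
      rw [(map_ofNat (MvPolynomial.C : ℂ →+* Cxy) 5).symm, ← map_mul,
        show (5 : ℂ) * (2/5) = 2 by norm_num, map_ofNat]
    have h35 : (35 : Cxy) ≠ 0 := by
      rw [(map_ofNat (MvPolynomial.C : ℂ →+* Cxy) 35).symm, ne_eq, MvPolynomial.C_eq_zero]
      norm_num
    apply mul_left_cancel₀ h35
    linear_combination (norm := ring1) (256760 * (MvPolynomial.X 1 : Cxy) ^ 10 + 118320 * (MvPolynomial.X 1 : Cxy) ^ 10*(MvPolynomial.C sqrt5C : Cxy) + 95200 * (MvPolynomial.X 1 : Cxy) ^ 10*(MvPolynomial.C sqrt5C : Cxy) ^ 2 + 39360 * (MvPolynomial.X 1 : Cxy) ^ 10*(MvPolynomial.C sqrt5C : Cxy) ^ 3 + 8000 * (MvPolynomial.X 1 : Cxy) ^ 10*(MvPolynomial.C sqrt5C : Cxy) ^ 4 + 640 * (MvPolynomial.X 1 : Cxy) ^ 10*(MvPolynomial.C sqrt5C : Cxy) ^ 5 + 131600 * (MvPolynomial.X 0 : Cxy)*(MvPolynomial.X 1 : Cxy) ^ 9 + 184000 * (MvPolynomial.X 0 : Cxy)*(MvPolynomial.X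 1 : Cxy) ^ 9*(MvPolynomial.C sqrt5C : Cxy) + 116800 * (MvPolynomial.X 0 : Cxy)*(MvPolynomial.X 1 : Cxy) ^ 9*(MvPolynomial.C sqrt5C : Cxy) ^ 2 + 32000 * (MvPolynomial.X 0 : Cxy)*(MvPolynomial.X 1 : Cxy) ^ 9*(MvPolynomial.C sqrt5C : Cxy) ^ 3 + 3200 * (MvPolynomial.X 0 : Cxy)*(MvPolynomial.X 1 : Cxy) ^ 9*(MvPolynomial.C sqrt5C : Cxy) ^ 4 + 321300 * (MvPolynomial.X 0 : Cxy) ^ 2*(MvPolynomial.X 1 : Cxy) ^ 8 + 127800 * (MvPolynomial.X 0 : Cxy) ^ 2*(MvPolynomial.X 1 : Cxy) ^ 8*(MvPolynomial.C sqrt5C : Cxy) + 54000 * (MvPolynomial.X 0 : Cxy) ^ 2*(MvPolynomial.X 1 : Cxy) ^ 8*(MvPolynomial.C sqrt5C : Cxy) ^ 2 + 7200 * (MvPolynomial.X 0 : Cxy) ^ 2*(MvPolynomial.X 1 : Cxy) ^ 8*(MvPolynomial.C sqrt5C : Cxy) ^ 3 + 50400 * (MvPolynomial.X 0 : Cxy)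 ^ 3*(MvPolynomial.X 1 : Cxy) ^ 7 + 48000 * (MvPolynomial.X 0 : Cxy) ^ 3*(MvPolynomial.X 1 : Cxy) ^ 7*(MvPolynomial.C sqrt5C : Cxy) + 9600 * (MvPolynomial.X 0 : Cxy) ^ 3*(MvPolynomial.X 1 : Cxy) ^ 7*(MvPolynomial.C sqrt5C : Cxy) ^ 2 - 10920 * (MvPolynomial.X 0 : Cxy) ^ 4*(MvPolynomial.X 1 : Cxy) ^ 6 + 8400 * (MvPolynomial.X 0 : Cxy) ^ 4*(MvPolynomial.X 1 : Cxy) ^ 6*(MvPolynomial.C sqrt5C : Cxy) + 5040 * (MvPolynomial.X 0 : Cxy) ^ 5*(MvPolynomial.X 1 : Cxy) ^ 5 + 8400 * (MvPolynomial.X 0 : Cxy) ^ 6*(MvPolynomial.X 1 : Cxy) ^ 4) * ht + (-216300 * (MvPolynomial.X 1 : Cxy) ^ 10 - 541200 * (MvPolynomial.X 1 : Cxy) ^ 10*(MvPolynomial.C sqrt5C : Cxy) - 410200 * (MvPolynomial.X 1 : Cxy) ^ 10*(MvPolynomial.C sqrt5C : Cxy) ^ 2 - 78480 * (MvPolynomial.X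 1 : Cxy) ^ 10*(MvPolynomial.C sqrt5C : Cxy) ^ 3 + 55200 * (MvPolynomial.X 1 : Cxy) ^ 10*(MvPolynomial.C sqrt5C : Cxy) ^ 4 + 36160 * (MvPolynomial.X 1 : Cxy) ^ 10*(MvPolynomial.C sqrt5C : Cxy) ^ 5 + 8000 * (MvPolynomial.X 1 : Cxy) ^ 10*(MvPolynomial.C sqrt5C : Cxy) ^ 6 + 640 * (MvPolynomial.X 1 : Cxy) ^ 10*(MvPolynomial.C sqrt5C : Cxy) ^ 7 - 658000 * (MvPolynomial.X 0 : Cxy)*(MvPolynomial.X 1 : Cxy) ^ 9 - 920000 * (MvPolynomial.X 0 : Cxy)*(MvPolynomial.X 1 : Cxy) ^ 9*(MvPolynomial.C sqrt5C : Cxy) - 452400 * (MvPolynomial.X 0 : Cxy)*(MvPolynomial.X 1 : Cxy) ^ 9*(MvPolynomial.C sqrt5C : Cxy) ^ 2 + 24000 * (MvPolynomial.X 0 : Cxy)*(MvPolynomial.X 1 : Cxy) ^ 9*(MvPolynomial.C sqrt5C : Cxy) ^ 3 + 100800 * (MvPolynomial.X 0 : Cxy)*(MvPolynomial.X 1 :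 Cxy) ^ 9*(MvPolynomial.C sqrt5C : Cxy) ^ 4 + 32000 * (MvPolynomial.X 0 : Cxy)*(MvPolynomial.X 1 : Cxy) ^ 9*(MvPolynomial.C sqrt5C : Cxy) ^ 5 + 3200 * (MvPolynomial.X 0 : Cxy)*(MvPolynomial.X 1 : Cxy) ^ 9*(MvPolynomial.C sqrt5C : Cxy) ^ 6 - 338625 * (MvPolynomial.X 0 : Cxy) ^ 2*(MvPolynomial.X 1 : Cxy) ^ 8 - 579150 * (MvPolynomial.X 0 : Cxy) ^ 2*(MvPolynomial.X 1 : Cxy) ^ 8*(MvPolynomial.C sqrt5C : Cxy) - 175500 * (MvPolynomial.X 0 : Cxy) ^ 2*(MvPolynomial.X 1 : Cxy) ^ 8*(MvPolynomial.C sqrt5C : Cxy) ^ 2 + 91800 * (MvPolynomial.X 0 : Cxy) ^ 2*(MvPolynomial.X 1 : Cxy) ^ 8*(MvPolynomial.C sqrt5C : Cxy) ^ 3 + 54000 * (MvPolynomial.X 0 : Cxy) ^ 2*(MvPolynomial.X 1 : Cxy) ^ 8*(MvPolynomial.C sqrt5C : Cxy) ^ 4 + 7200 * (MvPolynomial.X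 0 : Cxy) ^ 2*(MvPolynomial.X 1 : Cxy) ^ 8*(MvPolynomial.C sqrt5C : Cxy) ^ 5 - 252000 * (MvPolynomial.X 0 : Cxy) ^ 3*(MvPolynomial.X 1 : Cxy) ^ 7 - 240000 * (MvPolynomial.X 0 : Cxy) ^ 3*(MvPolynomial.X 1 : Cxy) ^ 7*(MvPolynomial.C sqrt5C : Cxy) + 2400 * (MvPolynomial.X 0 : Cxy) ^ 3*(MvPolynomial.X 1 : Cxy) ^ 7*(MvPolynomial.C sqrt5C : Cxy) ^ 2 + 48000 * (MvPolynomial.X 0 : Cxy) ^ 3*(MvPolynomial.X 1 : Cxy) ^ 7*(MvPolynomial.C sqrt5C : Cxy) ^ 3 + 9600 * (MvPolynomial.X 0 : Cxy) ^ 3*(MvPolynomial.X 1 : Cxy) ^ 7*(MvPolynomial.C sqrt5C : Cxy) ^ 4 - 123900 * (MvPolynomial.X 0 : Cxy) ^ 4*(MvPolynomial.X 1 : Cxy) ^ 6 - 50400 * (MvPolynomial.X 0 : Cxy) ^ 4*(MvPolynomial.X 1 : Cxy) ^ 6*(MvPolynomial.C sqrt5C : Cxy) + 21000 * (MvPolynomial.X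 0 : Cxy) ^ 4*(MvPolynomial.X 1 : Cxy) ^ 6*(MvPolynomial.C sqrt5C : Cxy) ^ 2 + 8400 * (MvPolynomial.X 0 : Cxy) ^ 4*(MvPolynomial.X 1 : Cxy) ^ 6*(MvPolynomial.C sqrt5C : Cxy) ^ 3 - 25200 * (MvPolynomial.X 0 : Cxy) ^ 5*(MvPolynomial.X 1 : Cxy) ^ 5 + 5040 * (MvPolynomial.X 0 : Cxy) ^ 5*(MvPolynomial.X 1 : Cxy) ^ 5*(MvPolynomial.C sqrt5C : Cxy) ^ 2 + 5250 * (MvPolynomial.X 0 : Cxy) ^ 6*(MvPolynomial.X 1 : Cxy) ^ 4 + 2100 * (MvPolynomial.X 0 : Cxy) ^ 6*(MvPolynomial.X 1 : Cxy) ^ 4*(MvPolynomial.C sqrt5C : Cxy)) * ha + (213500 * (MvPolynomial.X 1 : Cxy) ^ 10*(MvPolynomial.C sqrt5C : Cxy) + 95480 * (MvPolynomial.X 1 : Cxy) ^ 10*(MvPolynomial.C sqrt5C : Cxy) ^ 2 + 253575 * (MvPolynomial.X 0 : Cxy) ^ 2*(MvPolynomial.X 1 : Cxy) ^ 8*(MvPolynomial.C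 sqrt5C : Cxy) + 113400 * (MvPolynomial.X 0 : Cxy) ^ 2*(MvPolynomial.X 1 : Cxy) ^ 8*(MvPolynomial.C sqrt5C : Cxy) ^ 2 - 35700 * (MvPolynomial.X 0 : Cxy) ^ 4*(MvPolynomial.X 1 : Cxy) ^ 6*(MvPolynomial.C sqrt5C : Cxy) - 15960 * (MvPolynomial.X 0 : Cxy) ^ 4*(MvPolynomial.X 1 : Cxy) ^ 6*(MvPolynomial.C sqrt5C : Cxy) ^ 2 + 9450 * (MvPolynomial.X 0 : Cxy) ^ 6*(MvPolynomial.X 1 : Cxy) ^ 4*(MvPolynomial.C sqrt5C : Cxy) + 4200 * (MvPolynomial.X 0 : Cxy) ^ 6*(MvPolynomial.X 1 : Cxy) ^ 4*(MvPolynomial.C sqrt5C : Cxy) ^ 2) * hb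

end
end

section
/- Let q be a real number with q > 0 and q ≠ 1, and let W(x,y) = x^n + Σ_{i=d}^n A_i x^{n−i} y^i (A_d ≠ 0, 2 ≤ d ≤ n) be σ_q-invariant, i.e., W((x+(q−1)y)/√q, (x−y)/√q) = W(x,y). Let P(T) be the zeta polynomial of W and put g = n/2 + 1 − d. Then P satisfies the functional equation P(T) = P(1/(qT))·q^g·T^{2g} for all nonzero complex T (where 2g = n + 2 − 2d is a nonnegative integer and q^g denotes the real power of the positive real q). -/
/- STATEMENT 19 (functional equation): if W = x^n + ∑_{i=d}^n A_i x^{n-i}y^i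
(A_d ≠ 0, 2 ≤ d ≤ n) is σ_q-invariant and P is its zeta polynomial, then with
g = n/2 + 1 - d one has P(T) = P(1/(qT)) q^g T^{2g} for all T ≠ 0, where
2g = n + 2 - 2d is a nonnegative integer. -/

noncomputable section

/-- The action of `σ_q = (1/√q)[[1,q-1],[1,-1]]`: substitute
`x ↦ (x+(q-1)y)/√q`, `y ↦ (x-y)/√q`. -/
def actSigma (q : ℝ) (f : Cxy) : Cxy :=
  MvPolynomial.aeval
    ![MvPolynomial.C ((Real.sqrt q : ℂ))⁻¹ *
        (MvPolynomial.X 0 + MvPolynomial.C ((q : ℂ) - 1) * MvPolynomial.X 1),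
      MvPolynomial.C ((Real.sqrt q : ℂ))⁻¹ * (MvPolynomial.X 0 - MvPolynomial.X 1)] f

open Finset

def gam (q : ℝ) (m : ℤ) : ℂ :=
  if 0 ≤ m then ((q:ℂ) ^ (m.toNat + 1) - 1) / ((q:ℂ) - 1) else 0

lemma gam_neg (q : ℝ) {m : ℤ} (hm : m < 0) : gam q m = 0 := by
  simp [gam, not_le.mpr hm]

lemma gam_natCast (q : ℝ) (k : ℕ) : gam q (k:ℤ) = ((q:ℂ) ^ (k + 1) - 1) / ((q:ℂ) - 1) := by
  simp [gam]

lemma gam_geom (q : ℝ) (hq1 : (q:ℂ) ≠ 1) (k : ℕ) :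
    (∑ j ∈ range (k+1), (q:ℂ) ^ j) = gam q (k:ℤ) := by
  rw [gam_natCast, geom_sum_eq hq1]

lemma gam_rec (q : ℝ) (hq1 : (q:ℂ) ≠ 1) (m : ℤ) :
    gam q m - (1 + (q:ℂ)) * gam q (m-1) + (q:ℂ) * gam q (m-2)
      = if m = 0 then 1 else 0 := by
  have hqs : (q:ℂ) - 1 ≠ 0 := sub_ne_zero.mpr hq1
  rcases lt_trichotomy m 0 with h | h | h
  · rw [gam_neg q h, gam_neg q (by omega), gam_neg q (by omega)]
    simp [h.ne]
  · subst h
    rw [gam_neg q (by omega : (0:ℤ)-1 < 0), gam_neg q (by omega : (0:ℤ)-2 < 0)]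
    simp [gam]
    field_simp
    exact hqs
  · obtain ⟨k, rfl⟩ := Int.eq_ofNat_of_zero_le h.le
    have hk : k ≠ 0 := by exact_mod_cast h.ne'
    match k, hk with
    | 1, _ =>
      have e1 : ((1:ℕ):ℤ) - 1 = ((0:ℕ):ℤ) := by norm_num
      have e2 : ((1:ℕ):ℤ) - 2 < 0 := by norm_num
      rw [e1, gam_neg q e2, gam_natCast, gam_natCast]
      have : ((1:ℕ):ℤ) ≠ 0 := by norm_num
      rw [if_neg this]
      field_simp
      ring
    | (k+2), _ =>
      have e1 : ((k+2:ℕ):ℤ) - 1 = ((k+1:ℕ):ℤ) := by push_cast; ring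
      have e2 : ((k+2:ℕ):ℤ) - 2 = ((k:ℕ):ℤ) := by push_cast; ring
      rw [e1, e2, gam_natCast, gam_natCast, gam_natCast,
        if_neg (by exact_mod_cast Nat.succ_ne_zero (k+1))]
      field_simp
      ring

def czf (q : ℝ) (P : Polynomial ℂ) (r : ℕ) (t : ℕ) : ℂ :=
  ∑ j ∈ range (r+1), P.coeff j * gam q ((r:ℤ) - t - j)

lemma coeff_SPG (q : ℝ) (hq1 : (q:ℂ) ≠ 1) (P : Polynomial ℂ) (r : ℕ)
    (hdeg : P.degree ≤ (r:ℕ)) (N : ℕ) :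
    (PowerSeries.coeff N) (polyToSeries P * geomQ q)
      = algebraMap ℂ Cxy (∑ j ∈ range (r+1), P.coeff j * gam q ((N:ℤ) - j)) := by
  rw [PowerSeries.coeff_mul]
  rw [Finset.Nat.sum_antidiagonal_eq_sum_range_succ
    (f := fun a b => (PowerSeries.coeff a) (polyToSeries P) * (PowerSeries.coeff b) (geomQ q))]
  have hterm : ∀ k, (PowerSeries.coeff k) (polyToSeries P) *
      (PowerSeries.coeff (N - k)) (geomQ q)
      = algebraMap ℂ Cxy (P.coeff k * (∑ j ∈ range ((N-k) + 1), (q:ℂ) ^ j)) := by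
    intro k
    simp [polyToSeries, geomQ, PowerSeries.coeff_mk, map_mul]
  simp only [hterm]
  rw [← map_sum]
  congr 1
  -- now a scalar sum identity
  have congressum : ∀ M : ℕ, M ≤ N → M ≤ r →
      (∑ k ∈ range (M+1), P.coeff k * (∑ j ∈ range ((N-k) + 1), (q:ℂ) ^ j))
        = ∑ j ∈ range (M+1), P.coeff j * gam q ((N:ℤ) - j) := by
    intro M hMN hMr
    apply Finset.sum_congr rfl
    intro k hk
    simp only [Finset.mem_range] at hk
    have : ((N - k : ℕ) : ℤ) = (N:ℤ) - k := by omega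
    rw [gam_geom q hq1, this]
  rcases le_or_gt N r with hNr | hNr
  · have h2 : (∑ j ∈ range (r+1), P.coeff j * gam q ((N:ℤ) - j))
        = ∑ j ∈ range (N+1), P.coeff j * gam q ((N:ℤ) - j) := by
      symm
      apply Finset.sum_subset (Finset.range_subset_range.mpr (by omega))
      intro j _ hj
      simp only [Finset.mem_range, not_lt] at hj
      rw [gam_neg q (by omega : (N:ℤ) - j < 0), mul_zero]
    rw [h2, congressum N le_rfl hNr]
  · have h1 : (∑ k ∈ range (N+1), P.coeff k * (∑ j ∈ range ((N-k) + 1), (q:ℂ) ^ j))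
        = ∑ k ∈ range (r+1), P.coeff k * (∑ j ∈ range ((N-k) + 1), (q:ℂ) ^ j) := by
      symm
      apply Finset.sum_subset (Finset.range_subset_range.mpr (by omega))
      intro j _ hj
      simp only [Finset.mem_range, not_lt] at hj
      have : P.coeff j = 0 := by
        apply Polynomial.coeff_eq_zero_of_degree_lt
        exact lt_of_le_of_lt hdeg (by exact_mod_cast Nat.lt_of_succ_le hj)
      rw [this, zero_mul]
    rw [h1, congressum r hNr.le le_rfl]

lemma czf_eq_if (q : ℝ) (hq1 : (q:ℂ) ≠ 1) (P : Polynomial ℂ) (r : ℕ)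
    (hdeg : P.degree ≤ (r:ℕ)) (k : ℕ) :
    (if k ≤ r then (PowerSeries.coeff (r - k)) (polyToSeries P * geomQ q) else 0)
      = algebraMap ℂ Cxy (czf q P r k) := by
  rcases le_or_gt k r with h | h
  · rw [if_pos h, coeff_SPG q hq1 P r hdeg]
    unfold czf
    congr 1
    apply Finset.sum_congr rfl
    intro j _
    congr 2
    omega
  · rw [if_neg (not_le.mpr h)]
    have hz : czf q P r k = 0 := by
      apply Finset.sum_eq_zero
      intro j _
      rw [gam_neg q (by omega : (r:ℤ) - k - j < 0), mul_zero]
    rw [hz, map_zero]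

lemma coeff_mul_binom (q : ℝ) (hq1 : (q:ℂ) ≠ 1) (P : Polynomial ℂ) (r n : ℕ)
    (hdeg : P.degree ≤ (r:ℕ)) (a b : Cxy) :
    (PowerSeries.coeff r) (polyToSeries P * geomQ q *
        (PowerSeries.C b * PowerSeries.X + PowerSeries.C a) ^ n)
      = ∑ k ∈ range (n+1),
          algebraMap ℂ Cxy (czf q P r k) * ((n.choose k : Cxy) * (b ^ k * a ^ (n-k))) := by
  rw [add_pow]
  rw [Finset.mul_sum, map_sum]
  apply Finset.sum_congr rfl
  intro k hk
  have h1 : polyToSeries P * geomQ q * ((PowerSeries.C b * PowerSeries.X) ^ k *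
        PowerSeries.C a ^ (n - k) * (n.choose k : PowerSeries Cxy))
      = PowerSeries.C ((n.choose k : Cxy) * (b ^ k * a ^ (n-k))) *
          (polyToSeries P * geomQ q * PowerSeries.X ^ k) := by
    rw [mul_pow, ← map_pow, ← map_pow, ← map_natCast (PowerSeries.C) (n.choose k),
      map_mul, map_mul]
    ring
  rw [h1, PowerSeries.coeff_C_mul, PowerSeries.coeff_mul_X_pow',
    czf_eq_if q hq1 P r hdeg k]
  ring

lemma coeff_sum_CXpow (α : ℕ → ℂ) (n t : ℕ) (ht : t ≤ n) :
    (∑ k ∈ range (n+1), Polynomial.C (α k) * Polynomial.X ^ k).coeff t = α t := by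
  rw [Polynomial.finset_sum_coeff]
  rw [Finset.sum_eq_single t]
  · simp
  · intro k _ hk
    simp [Polynomial.coeff_C_mul, Polynomial.coeff_X_pow, Ne.symm hk]
  · intro h
    exact absurd (Finset.mem_range.mpr (by omega)) h

lemma coeff_sum_CXpow' (α : ℕ → ℂ) (n t : ℕ) (ht : t ≤ n) :
    (∑ k ∈ range (n+1), Polynomial.C (α k) * Polynomial.X ^ (n-k)).coeff t = α (n - t) := by
  rw [Polynomial.finset_sum_coeff]
  rw [Finset.sum_eq_single (n-t)]
  · rw [Polynomial.coeff_C_mul, Polynomial.coeff_X_pow, if_pos (by omega), mul_one]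
  · intro k hk hne
    simp only [Finset.mem_range] at hk
    rw [Polynomial.coeff_C_mul, Polynomial.coeff_X_pow, if_neg (by omega), mul_zero]
  · intro h
    exact absurd (Finset.mem_range.mpr (by omega)) h

lemma map_polyToSeries (σ : Cxy →ₐ[ℂ] Cxy) (P : Polynomial ℂ) :
    PowerSeries.map σ.toRingHom (polyToSeries P) = polyToSeries P := by
  ext N
  rw [PowerSeries.coeff_map]
  simp [polyToSeries, PowerSeries.coeff_mk, AlgHom.commutes]

lemma map_geomQ (σ : Cxy →ₐ[ℂ] Cxy) (q : ℝ) :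
    PowerSeries.map σ.toRingHom (geomQ q) = geomQ q := by
  ext N
  rw [PowerSeries.coeff_map]
  simp [geomQ, PowerSeries.coeff_mk, AlgHom.commutes]

lemma map_binom_pow (σ : Cxy →ₐ[ℂ] Cxy) (a b : Cxy) (n : ℕ) :
    PowerSeries.map σ.toRingHom
        ((PowerSeries.C b * PowerSeries.X + PowerSeries.C a) ^ n)
      = (PowerSeries.C (σ b) * PowerSeries.X + PowerSeries.C (σ a)) ^ n := by
  rw [map_pow, map_add, map_mul, PowerSeries.map_C, PowerSeries.map_C, PowerSeries.map_X]
  rfl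

lemma body_binom (n : ℕ) :
    bodySeries n = (PowerSeries.C (MvPolynomial.X 0 - MvPolynomial.X 1) * PowerSeries.X
      + PowerSeries.C (MvPolynomial.X 1)) ^ n := by
  unfold bodySeries
  rw [map_sub]
  ring


theorem zeta_functional_equation (q : ℝ) (hq0 : 0 < q) (hq1 : q ≠ 1)
    (n d : ℕ) (hd2 : 2 ≤ d) (hdn : d ≤ n) (A : ℕ → ℂ) (hAd : A d ≠ 0) (W : Cxy)
    (hW : W = MvPolynomial.X 0 ^ n +
      ∑ i ∈ Finset.Icc d n, MvPolynomial.C (A i) * MvPolynomial.X 0 ^ (n - i) *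
        MvPolynomial.X 1 ^ i)
    (hinv : actSigma q W = W)
    (P : Polynomial ℂ) (hP : IsZetaPoly q n d W P) :
    0 ≤ (n : ℤ) + 2 - 2 * (d : ℤ) ∧
    ∀ T : ℂ, T ≠ 0 →
      P.eval T = P.eval (1 / ((q : ℂ) * T)) *
        ((q ^ ((n : ℝ) / 2 + 1 - (d : ℝ)) : ℝ) : ℂ) * T ^ ((n : ℤ) + 2 - 2 * (d : ℤ)) := by
  obtain ⟨hPdeg, hPeq⟩ := hP
  set r : ℕ := n - d with hrdef
  have hq0' : (q:ℂ) ≠ 0 := by exact_mod_cast hq0.ne'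
  have hq1' : (q:ℂ) ≠ 1 := by
    intro h; exact hq1 (by exact_mod_cast h)
  have hspos : 0 < Real.sqrt q := Real.sqrt_pos.mpr hq0
  have hs0 : ((Real.sqrt q : ℝ):ℂ) ≠ 0 := by exact_mod_cast hspos.ne'
  have hsq : ((Real.sqrt q : ℝ):ℂ)^2 = (q:ℂ) := by exact_mod_cast Real.sq_sqrt hq0.le
  set s : ℂ := ((Real.sqrt q : ℝ):ℂ) with hsdef
  set e : ℂ := ((q:ℂ) - 1)⁻¹ with hedef
  have he : e ≠ 0 := inv_ne_zero (sub_ne_zero.mpr hq1')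
  set u : ℂ := s⁻¹ with hudef
  set X0 : Cxy := MvPolynomial.X 0 with hX0def
  set X1 : Cxy := MvPolynomial.X 1 with hX1def
  -- extraction A
  have EqA : (∑ k ∈ range (n+1), algebraMap ℂ Cxy (czf q P r k) *
      ((n.choose k : Cxy) * ((X0 - X1)^k * X1^(n-k))))
      = MvPolynomial.C e * (W - X0 ^ n) := by
    rw [← coeff_mul_binom q hq1' P r n hPdeg X1 (X0 - X1), ← body_binom]
    exact hPeq
  -- the sigma algebra hom
  set σA : Cxy →ₐ[ℂ] Cxy := MvPolynomial.aeval
    ![MvPolynomial.C ((Real.sqrt q : ℂ))⁻¹ *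
        (MvPolynomial.X 0 + MvPolynomial.C ((q : ℂ) - 1) * MvPolynomial.X 1),
      MvPolynomial.C ((Real.sqrt q : ℂ))⁻¹ * (MvPolynomial.X 0 - MvPolynomial.X 1)] with hσdef
  have hσX0 : σA X0 = MvPolynomial.C u * (X0 + MvPolynomial.C ((q:ℂ)-1) * X1) := by
    rw [hX0def, hσdef, MvPolynomial.aeval_X]
    rfl
  have hσX1 : σA X1 = MvPolynomial.C u * (X0 - X1) := by
    rw [hX1def, hσdef, MvPolynomial.aeval_X]
    rfl
  have hσsub : σA (X0 - X1) = MvPolynomial.C (u * q) * X1 := by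
    rw [map_sub, hσX0, hσX1]
    have h1 : (MvPolynomial.C ((q:ℂ)-1) : Cxy) = MvPolynomial.C (q:ℂ) - 1 := by
      rw [map_sub, map_one]
    rw [h1, map_mul]
    ring
  have hσW : σA W = W := hinv
  -- extraction B
  have EqB : (∑ k ∈ range (n+1), algebraMap ℂ Cxy (czf q P r k) *
      ((n.choose k : Cxy) * ((MvPolynomial.C (u * q) * X1)^k * (MvPolynomial.C u * (X0 - X1))^(n-k))))
      = MvPolynomial.C e * (W - (MvPolynomial.C u * (X0 + MvPolynomial.C ((q:ℂ)-1) * X1)) ^ n) := by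
    have h0 := congrArg σA hPeq
    have hL : σA ((PowerSeries.coeff r) (polyToSeries P * geomQ q * bodySeries n))
        = (PowerSeries.coeff r) (polyToSeries P * geomQ q *
            (PowerSeries.C (MvPolynomial.C (u*q) * X1) * PowerSeries.X
              + PowerSeries.C (MvPolynomial.C u * (X0 - X1))) ^ n) := by
      have hM : PowerSeries.map σA.toRingHom (polyToSeries P * geomQ q * bodySeries n)
          = polyToSeries P * geomQ q *
            (PowerSeries.C (MvPolynomial.C (u*q) * X1) * PowerSeries.X
              + PowerSeries.C (MvPolynomial.C u * (X0 - X1))) ^ n := by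
        rw [map_mul, map_mul, map_polyToSeries, map_geomQ, body_binom, map_binom_pow,
          hσsub, hσX1]
      rw [← AlgHom.coe_toRingHom, ← PowerSeries.coeff_map,
        show (↑σA : Cxy →+* Cxy) = σA.toRingHom from rfl, hM]
    have hR : σA (MvPolynomial.C e * (W - X0 ^ n))
        = MvPolynomial.C e * (W - (MvPolynomial.C u * (X0 + MvPolynomial.C ((q:ℂ)-1) * X1)) ^ n) := by
      rw [map_mul, map_sub, map_pow, hσX0, hσW]
      congr 1
      rw [hσdef, MvPolynomial.aeval_C]
      rfl
    rw [hL, hR] at h0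
    rw [← coeff_mul_binom q hq1' P r n hPdeg (MvPolynomial.C u * (X0 - X1)) (MvPolynomial.C (u*q) * X1)]
    exact h0
  -- pass to univariate polynomials via x ↦ X+1, y ↦ 1
  set ψ : Cxy →ₐ[ℂ] Polynomial ℂ := MvPolynomial.aeval ![Polynomial.X + 1, 1] with hψdef
  have hψX0 : ψ X0 = Polynomial.X + 1 := by
    rw [hX0def, hψdef, MvPolynomial.aeval_X]; rfl
  have hψX1 : ψ X1 = 1 := by
    rw [hX1def, hψdef, MvPolynomial.aeval_X]; rfl
  have hψC : ∀ z : ℂ, ψ (MvPolynomial.C z) = Polynomial.C z := by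
    intro z; rw [hψdef, MvPolynomial.aeval_C]; rfl
  have hψalg : ∀ z : ℂ, ψ (algebraMap ℂ Cxy z) = Polynomial.C z := by
    intro z
    rw [AlgHom.commutes]
    rfl
  have hψW : ψ W = (Polynomial.X + 1)^n
      + ∑ i ∈ Icc d n, Polynomial.C (A i) * (Polynomial.X + 1)^(n-i) := by
    rw [hW, map_add, map_pow, hψX0, map_sum]
    congr 1
    apply Finset.sum_congr rfl
    intro i _
    rw [map_mul, map_mul, map_pow, map_pow, hψX0, hψX1, hψC, one_pow, mul_one]
  have PA : (∑ k ∈ range (n+1), Polynomial.C (czf q P r k * (n.choose k : ℂ)) * Polynomial.X ^ k)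
      = Polynomial.C e * ∑ i ∈ Icc d n, Polynomial.C (A i) * (Polynomial.X + 1)^(n-i) := by
    have h0 := congrArg ψ EqA
    rw [map_sum] at h0
    have hterm : ∀ k ∈ range (n+1), ψ (algebraMap ℂ Cxy (czf q P r k) *
        ((n.choose k : Cxy) * ((X0 - X1)^k * X1^(n-k))))
        = Polynomial.C (czf q P r k * (n.choose k:ℂ)) * Polynomial.X ^ k := by
      intro k _
      rw [map_mul, map_mul, map_natCast, map_mul, map_pow, map_pow, map_sub, hψX0, hψX1,
        hψalg, add_sub_cancel_right, one_pow, mul_one, Polynomial.C_mul,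
        Polynomial.C_eq_natCast]
      ring
    rw [Finset.sum_congr rfl hterm] at h0
    rw [h0, map_mul, map_sub, map_pow, hψX0, hψC, hψW]
    ring
  have PB : (∑ k ∈ range (n+1),
        Polynomial.C (czf q P r k * (n.choose k:ℂ) * (u^n * (q:ℂ)^k)) * Polynomial.X ^ (n-k))
      = Polynomial.C e * ((Polynomial.X+1)^n
          + (∑ i ∈ Icc d n, Polynomial.C (A i) * (Polynomial.X+1)^(n-i))
          - Polynomial.C (u^n) * (Polynomial.X + Polynomial.C (q:ℂ))^n) := by
    have h0 := congrArg ψ EqB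
    rw [map_sum] at h0
    have hterm : ∀ k ∈ range (n+1), ψ (algebraMap ℂ Cxy (czf q P r k) *
        ((n.choose k : Cxy) * ((MvPolynomial.C (u * q) * X1)^k
          * (MvPolynomial.C u * (X0 - X1))^(n-k))))
        = Polynomial.C (czf q P r k * (n.choose k:ℂ) * (u^n * (q:ℂ)^k)) * Polynomial.X ^ (n-k) := by
      intro k hk
      simp only [Finset.mem_range] at hk
      have hpow : (u * (q:ℂ))^k * u^(n-k) = u^n * (q:ℂ)^k := by
        rw [mul_pow, mul_right_comm, ← pow_add]
        congr 2
        omega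
      simp only [map_mul, map_pow, map_sub, map_natCast, hψX0, hψX1, hψC, hψalg,
        add_sub_cancel_right, one_pow, mul_one]
      have hun : (Polynomial.C u)^n = (Polynomial.C u)^k * (Polynomial.C u)^(n-k) := by
        rw [← pow_add]
        congr 1
        omega
      rw [hun]
      ring
    rw [Finset.sum_congr rfl hterm] at h0
    rw [h0]
    simp only [map_mul, map_sub, map_add, map_pow, hψX0, hψX1, hψC, hψW, mul_one]
    have h2 : Polynomial.X + 1 + (Polynomial.C (q:ℂ) - Polynomial.C 1)
        = Polynomial.X + Polynomial.C (q:ℂ) := by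
      rw [map_one]; ring
    rw [h2, mul_pow]
  -- scalar coefficient equations
  have PAc : ∀ t : ℕ, t ≤ n → czf q P r t * (n.choose t : ℂ)
      = e * ∑ i ∈ Icc d n, A i * ((n-i).choose t : ℂ) := by
    intro t ht
    have h0 := congrArg (fun F : Polynomial ℂ => F.coeff t) PA
    rw [coeff_sum_CXpow (fun k => czf q P r k * (n.choose k : ℂ)) n t ht] at h0
    rw [h0, Polynomial.coeff_C_mul, Polynomial.finset_sum_coeff]
    congr 1
    apply Finset.sum_congr rfl
    intro i _
    rw [Polynomial.coeff_C_mul, Polynomial.coeff_X_add_one_pow]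
  have PBc : ∀ t : ℕ, t ≤ n → czf q P r (n-t) * ((n.choose (n-t)) : ℂ) * (u^n * (q:ℂ)^(n-t))
      = e * ((n.choose t : ℂ) + (∑ i ∈ Icc d n, A i * ((n-i).choose t : ℂ))
          - u^n * ((q:ℂ)^(n-t) * (n.choose t : ℂ))) := by
    intro t ht
    have h0 := congrArg (fun F : Polynomial ℂ => F.coeff t) PB
    rw [coeff_sum_CXpow' (fun k => czf q P r k * (n.choose k:ℂ) * (u^n * (q:ℂ)^k)) n t ht] at h0
    rw [h0, Polynomial.coeff_C_mul, Polynomial.coeff_sub, Polynomial.coeff_add,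
      Polynomial.coeff_X_add_one_pow, Polynomial.finset_sum_coeff, Polynomial.coeff_C_mul,
      Polynomial.coeff_X_add_C_pow]
    congr 3
    apply Finset.sum_congr rfl
    intro i _
    rw [Polynomial.coeff_C_mul, Polynomial.coeff_X_add_one_pow]
  -- the reflection relation on the c-coefficients
  have Rrel : ∀ t : ℕ, t ≤ n →
      (q:ℂ)^(n-t) * (czf q P r (n-t) + e) = s^n * (czf q P r t + e) := by
    intro t ht
    have h1 := PAc t ht
    have h2 := PBc t ht
    have hch : ((n.choose (n-t)) : ℂ) = (n.choose t : ℂ) := by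
      rw [Nat.choose_symm ht]
    have hcne : (n.choose t : ℂ) ≠ 0 := Nat.cast_ne_zero.mpr (Nat.choose_pos ht).ne'
    have hun0 : u^n ≠ 0 := pow_ne_zero _ (inv_ne_zero hs0)
    have hus : u^n * s^n = 1 := by
      rw [hudef, ← mul_pow, inv_mul_cancel₀ hs0, one_pow]
    rw [hch] at h2
    have hchu : ((n.choose t:ℂ)) * u^n ≠ 0 := mul_ne_zero hcne hun0
    have key : ((q:ℂ)^(n-t) * (czf q P r (n-t) + e)) * ((n.choose t:ℂ) * u^n)
        = (s^n * (czf q P r t + e)) * ((n.choose t:ℂ) * u^n) := by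
      linear_combination h2 - h1 - ((n.choose t:ℂ) * (czf q P r t + e)) * hus
    exact mul_right_cancel₀ hchu key
  -- integer-indexed coefficients of P
  set p : ℤ → ℂ := fun m => if 0 ≤ m then P.coeff m.toNat else 0 with hpdef
  have p_neg : ∀ m : ℤ, m < 0 → p m = 0 := by
    intro m hm; rw [hpdef]; simp [not_le.mpr hm]
  have p_high : ∀ m : ℤ, (r:ℤ) < m → p m = 0 := by
    intro m hm
    rw [hpdef]
    simp only
    split
    · apply Polynomial.coeff_eq_zero_of_degree_lt
      refine lt_of_le_of_lt hPdeg ?_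
      exact_mod_cast (by omega : r < m.toNat)
    · rfl
  have p_nonneg : ∀ m : ℤ, 0 ≤ m → p m = P.coeff m.toNat := by
    intro m hm; rw [hpdef]; simp [hm]
  -- differencing: recover coefficients of P from the c's
  have diff : ∀ t : ℕ, czf q P r t - (1 + (q:ℂ)) * czf q P r (t+1) + (q:ℂ) * czf q P r (t+2)
      = p ((r:ℤ) - t) := by
    intro t
    have hsplit : czf q P r t - (1+(q:ℂ)) * czf q P r (t+1) + (q:ℂ) * czf q P r (t+2)
        = ∑ j ∈ range (r+1), P.coeff j *
            (gam q ((r:ℤ)-t-j) - (1+(q:ℂ)) * gam q ((r:ℤ)-t-j-1)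
              + (q:ℂ) * gam q ((r:ℤ)-t-j-2)) := by
      unfold czf
      rw [Finset.mul_sum, Finset.mul_sum, ← Finset.sum_sub_distrib, ← Finset.sum_add_distrib]
      apply Finset.sum_congr rfl
      intro j _
      have c1 : (r:ℤ) - (t+1:ℕ) - j = (r:ℤ) - t - j - 1 := by push_cast; ring
      have c2 : (r:ℤ) - (t+2:ℕ) - j = (r:ℤ) - t - j - 2 := by push_cast; ring
      rw [c1, c2]
      ring
    rw [hsplit]
    have hterm : ∀ j ∈ range (r+1), P.coeff j *
        (gam q ((r:ℤ)-t-j) - (1+(q:ℂ)) * gam q ((r:ℤ)-t-j-1) + (q:ℂ) * gam q ((r:ℤ)-t-j-2))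
        = P.coeff j * (if (r:ℤ)-t-j = 0 then 1 else 0) := by
      intro j _
      rw [gam_rec q hq1' ((r:ℤ)-t-j)]
    rw [Finset.sum_congr rfl hterm]
    rcases le_or_gt t r with htr | htr
    · rw [Finset.sum_eq_single (r-t)]
      · rw [if_pos (by omega), mul_one, p_nonneg _ (by omega)]
        congr 1
        omega
      · intro j _ hj
        rw [if_neg (by omega), mul_zero]
      · intro h
        exact absurd (Finset.mem_range.mpr (by omega)) h
    · rw [Finset.sum_eq_zero, eq_comm]
      · exact p_neg _ (by omega)
      · intro j _
        rw [if_neg (by omega), mul_zero]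
  -- the key reflection identity
  have Key : ∀ t : ℕ, t + 2 ≤ n →
      s^n * p ((r:ℤ) - t) = (q:ℂ)^(n-t-1) * p ((t:ℤ) + 2 - d) := by
    intro t ht
    have hrz : (r:ℤ) = (n:ℤ) - d := by omega
    set M : ℕ := n - t - 2 with hM
    have e2 : n - t = M + 2 := by omega
    have e1 : n - (t+1) = M+1 := by omega
    have e0 : n - (t+2) = M := by omega
    have R0 := Rrel t (by omega)
    have R1 := Rrel (t+1) (by omega)
    have R2 := Rrel (t+2) ht
    rw [e2] at R0
    rw [e1] at R1
    rw [e0] at R2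
    have hDt := diff t
    have hDM := diff M
    have hMr : (t:ℤ) + 2 - d = (r:ℤ) - M := by omega
    rw [hMr, ← hDM, ← hDt]
    have hnt1 : n - t - 1 = M + 1 := by omega
    rw [hnt1]
    linear_combination (-1 : ℂ) * R0 + (1+(q:ℂ)) * R1 - (q:ℂ) * R2
  -- nonvanishing of P₀ and nonnegativity of 2g
  have hczr : czf q P r r = P.coeff 0 := by
    unfold czf
    rw [Finset.sum_eq_single 0]
    · have harg : (r:ℤ) - (r:ℕ) - ((0:ℕ):ℤ) = ((0:ℕ):ℤ) := by push_cast; ring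
      rw [harg, gam_natCast, pow_one, div_self (sub_ne_zero.mpr hq1'), mul_one]
    · intro j _ hj
      rw [gam_neg q (by omega), mul_zero]
    · intro h
      exact absurd (Finset.mem_range.mpr (by omega)) h
  have hP0 : P.coeff 0 * ((n.choose r : ℂ)) = e * A d := by
    have h1 := PAc r (by omega)
    rw [hczr] at h1
    rw [h1]
    congr 1
    rw [Finset.sum_eq_single d]
    · have : (n-d).choose r = 1 := by
        have : n - d = r := rfl
        rw [this, Nat.choose_self]
      rw [this, Nat.cast_one, mul_one]
    · intro i hi hne
      simp only [Finset.mem_Icc] at hi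
      have : (n-i).choose r = 0 := Nat.choose_eq_zero_of_lt (by omega)
      rw [this, Nat.cast_zero, mul_zero]
    · intro h
      exact absurd (Finset.mem_Icc.mpr ⟨le_rfl, hdn⟩) h
  have hP0ne : P.coeff 0 ≠ 0 := by
    intro h
    rw [h, zero_mul] at hP0
    rcases mul_eq_zero.mp hP0.symm with h'|h'
    · exact he h'
    · exact hAd h'
  have hg2 : 0 ≤ (n:ℤ) + 2 - 2*(d:ℤ) := by
    by_contra hlt
    push_neg at hlt
    have hK := Key r (by omega)
    rw [p_neg ((r:ℤ)+2-d) (by omega)] at hK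
    rw [mul_zero] at hK
    have h0 : p ((r:ℤ) - r) = 0 := by
      rcases mul_eq_zero.mp hK with h'|h'
      · exact absurd h' (pow_ne_zero _ hs0)
      · exact h'
    rw [show (r:ℤ) - r = 0 by omega, p_nonneg 0 le_rfl] at h0
    exact hP0ne h0
  set g2 : ℤ := (n:ℤ) + 2 - 2*(d:ℤ) with hg2def
  have hrz : (r:ℤ) = (n:ℤ) - d := by omega
  -- full coefficient reflection
  have refl : ∀ m : ℤ, p m = s^(2*m - g2) * p (g2 - m) := by
    intro m
    rcases le_or_gt 0 m with hm0 | hm0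
    · rcases le_or_gt m (r:ℤ) with hmr | hmr
      · -- main case
        set t : ℕ := r - m.toNat with htdef
        have hmt : (m.toNat : ℤ) = m := Int.toNat_of_nonneg hm0
        have h1 := Key t (by omega)
        have hrt : (r:ℤ) - t = m := by omega
        have hgd : (t:ℤ) + 2 - d = g2 - m := by omega
        rw [hrt, hgd] at h1
        have hsn0 : (s:ℂ)^n ≠ 0 := pow_ne_zero _ hs0
        have hq2 : (q:ℂ)^(n-t-1) = s^(2*(n-t-1)) := by
          rw [pow_mul, hsq]
        calc p m = (s^n)⁻¹ * (s^n * p m) := by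
              field_simp
          _ = (s^n)⁻¹ * (s^(2*(n-t-1)) * p (g2 - m)) := by rw [h1, hq2]
          _ = s^(2*m - g2) * p (g2-m) := by
              rw [← zpow_natCast s (2*(n-t-1)), ← zpow_natCast s n, ← zpow_neg,
                ← mul_assoc, ← zpow_add₀ hs0]
              congr 2
              omega
      · -- m > r
        rw [p_high m hmr, p_neg (g2 - m) (by omega), mul_zero]
    · rcases le_or_gt (2 - (d:ℤ)) m with hm2 | hm2
      · -- 2 - d ≤ m < 0
        set t : ℕ := ((r:ℤ) - m).toNat with htdef
        have hmt : (t : ℤ) = (r:ℤ) - m := Int.toNat_of_nonneg (by omega)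
        have h1 := Key t (by omega)
        have hrt : (r:ℤ) - t = m := by omega
        have hgd : (t:ℤ) + 2 - d = g2 - m := by omega
        rw [hrt, hgd] at h1
        rw [p_neg m hm0, mul_zero] at h1
        have h2 : p (g2 - m) = 0 := by
          rcases mul_eq_zero.mp h1.symm with h'|h'
          · exact absurd h' (pow_ne_zero _ hq0')
          · exact h'
        rw [p_neg m hm0, h2, mul_zero]
      · -- m < 2 - d
        rw [p_neg m hm0, p_high (g2 - m) (by omega), mul_zero]
  refine ⟨hg2, ?_⟩
  intro T hT
  have hnd : P.natDegree ≤ r := Polynomial.natDegree_le_iff_degree_le.mpr hPdeg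
  rw [Polynomial.eval_eq_sum_range' (lt_of_le_of_lt hnd (Nat.lt_succ_self r)) T,
    Polynomial.eval_eq_sum_range' (lt_of_le_of_lt hnd (Nat.lt_succ_self r)) (1/((q:ℂ)*T))]
  have hrpow : ((q ^ ((n:ℝ)/2 + 1 - (d:ℝ)) : ℝ) : ℂ) = s ^ g2 := by
    have h1 : (n:ℝ)/2 + 1 - (d:ℝ) = (1/2) * ((g2:ℤ):ℝ) := by
      rw [hg2def]; push_cast; ring
    rw [h1, Real.rpow_mul hq0.le, ← Real.sqrt_eq_rpow, Real.rpow_intCast]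
    rw [hsdef]
    push_cast
    rfl
  rw [hrpow]
  set J : Finset ℤ := Finset.Icc (2 - (d:ℤ)) (r:ℤ) with hJdef
  have hqT : (q:ℂ) * T ≠ 0 := mul_ne_zero hq0' hT
  -- LHS as a J-sum
  have hLHS : (∑ i ∈ range (r+1), P.coeff i * T^i) = ∑ m ∈ J, p m * T^m := by
    have h2 : (∑ m ∈ Finset.Icc (0:ℤ) (r:ℤ), p m * T^m)
        = ∑ i ∈ range (r+1), P.coeff i * T^i := by
      refine Finset.sum_nbij' (fun m => m.toNat) (fun i => (i:ℤ)) ?_ ?_ ?_ ?_ ?_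
      · intro a ha
        simp only [Finset.mem_Icc] at ha
        exact Finset.mem_range.mpr (by omega)
      · intro a ha
        simp only [Finset.mem_range] at ha
        exact Finset.mem_Icc.mpr (by omega)
      · intro a ha
        simp only [Finset.mem_Icc] at ha
        omega
      · intro a _
        omega
      · intro a ha
        simp only [Finset.mem_Icc] at ha
        rw [p_nonneg a ha.1]
        congr 1
        rw [← zpow_natCast T a.toNat]
        congr 1
        omega
    rw [← h2]
    apply Finset.sum_subset
    · intro x hx
      simp only [hJdef, Finset.mem_Icc] at hx ⊢
      omega
    · intro x hx hnx
      simp only [hJdef, Finset.mem_Icc, not_and, not_le] at hx hnx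
      rw [p_neg x (by omega), zero_mul]
  -- RHS as a J-sum
  have hRHS : (∑ i ∈ range (r+1), P.coeff i * (1/((q:ℂ)*T))^i) * s^g2 * T^g2
      = ∑ m ∈ J, p m * ((q:ℂ)*T)^(-m) * (s^g2 * T^g2) := by
    rw [Finset.sum_mul, Finset.sum_mul]
    have h2 : (∑ m ∈ Finset.Icc (0:ℤ) (r:ℤ), p m * ((q:ℂ)*T)^(-m) * (s^g2 * T^g2))
        = ∑ i ∈ range (r+1), P.coeff i * (1/((q:ℂ)*T))^i * s^g2 * T^g2 := by
      refine Finset.sum_nbij' (fun m => m.toNat) (fun i => (i:ℤ)) ?_ ?_ ?_ ?_ ?_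
      · intro a ha
        simp only [Finset.mem_Icc] at ha
        exact Finset.mem_range.mpr (by omega)
      · intro a ha
        simp only [Finset.mem_range] at ha
        exact Finset.mem_Icc.mpr (by omega)
      · intro a ha
        simp only [Finset.mem_Icc] at ha
        omega
      · intro a _
        omega
      · intro a ha
        simp only [Finset.mem_Icc] at ha
        rw [p_nonneg a ha.1]
        have : (1/((q:ℂ)*T))^(a.toNat) = ((q:ℂ)*T)^(-a) := by
          rw [one_div, inv_pow, ← zpow_natCast ((q:ℂ)*T) a.toNat, ← zpow_neg]
          congr 1
          omega
        rw [this]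
        ring
    rw [← h2]
    apply Finset.sum_subset
    · intro x hx
      simp only [hJdef, Finset.mem_Icc] at hx ⊢
      omega
    · intro x hx hnx
      simp only [hJdef, Finset.mem_Icc, not_and, not_le] at hx hnx
      rw [p_neg x (by omega), zero_mul, zero_mul]
  rw [hLHS, hRHS]
  -- reindex m ↦ g2 - m
  have hre : (∑ m ∈ J, p m * ((q:ℂ)*T)^(-m) * (s^g2 * T^g2))
      = ∑ m ∈ J, p (g2 - m) * ((q:ℂ)*T)^(-(g2 - m)) * (s^g2 * T^g2) := by
    apply Finset.sum_nbij' (fun m => g2 - m) (fun m => g2 - m)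
    · intro a ha
      simp only [hJdef, Finset.mem_Icc] at ha ⊢
      omega
    · intro a ha
      simp only [hJdef, Finset.mem_Icc] at ha ⊢
      omega
    · intro a _
      show g2 - (g2 - a) = a
      omega
    · intro a _
      show g2 - (g2 - a) = a
      omega
    · intro a _
      show p a * ((q:ℂ)*T)^(-a) * (s^g2 * T^g2)
          = p (g2 - (g2 - a)) * ((q:ℂ)*T)^(-(g2 - (g2 - a))) * (s^g2 * T^g2)
      rw [show g2 - (g2 - a) = a by omega]
  rw [hre]
  apply Finset.sum_congr rfl
  intro m _
  rw [refl m]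
  have hqs : (q:ℂ)^(m - g2) = s^(2*m - 2*g2) := by
    rw [← hsq, ← zpow_natCast s 2, ← zpow_mul]
    congr 1
    push_cast
    ring
  rw [show -(g2 - m) = m - g2 by ring, mul_zpow, hqs]
  have h1 : s^(2*m - 2*g2) * s^g2 = s^(2*m - g2) := by
    rw [← zpow_add₀ hs0]
    congr 1
    ring
  have h2 : T^(m - g2) * T^g2 = T^m := by
    rw [← zpow_add₀ hT]
    congr 1
    ring
  rw [← h1, ← h2]
  ring

end
end
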